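/- Blackwell improvements lower the interim belief under threshold play: let E = ({l,h}, p_L, p_H) and E' = ({l',h'}, p'_L, p'_H) be binary experiments with E' Blackwell more informative than E, i.e. p'_H(l')·p_L(l) ≤ p_H(l)·p'_L(l) (weakly stronger bad news) and p'_H(h')·p_L(h) ≥ p_H(h)·p'_L(h) (weakly stronger good news). Let σ_1 be the strategy for E with σ_1(l) = 0, σ_1(h) = 1, and σ'_1 the analogous strategy for E'. Then Ψ'(σ'_1) ≤ Ψ(σ_1). -/

import Mathlib

open Finset Filter Topology

noncomputable section

/-- Probability that a single buyer rejects the seller, given conditional signal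
distribution `p` and strategy `σ`: `r_θ(σ) = 1 - Σ_s p_θ(s)·σ(s)`. -/
def rej {m : ℕ} (p σ : Fin m → ℝ) : ℝ := 1 - ∑ s, p s * σ s

/-- `ν_θ(σ) = (1/n)·Σ_{k=0}^{n-1} r_θ(σ)^k`: probability of being visited. -/
def visit (n : ℕ) {m : ℕ} (p σ : Fin m → ℝ) : ℝ :=
  (1 / (n : ℝ)) * ∑ k ∈ Finset.range n, rej p σ ^ k

/-- Interim belief `Ψ(σ) = ρ·ν_H(σ) / (ρ·ν_H(σ) + (1-ρ)·ν_L(σ))`. -/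
def interim (ρ : ℝ) (n : ℕ) {m : ℕ} (pL pH σ : Fin m → ℝ) : ℝ :=
  ρ * visit n pH σ / (ρ * visit n pH σ + (1 - ρ) * visit n pL σ)

/-- Posterior belief `Q_ψ(s) = ψ·p_H(s) / (ψ·p_H(s) + (1-ψ)·p_L(s))`. -/
def post {m : ℕ} (ψ : ℝ) (pL pH : Fin m → ℝ) (s : Fin m) : ℝ :=
  ψ * pH s / (ψ * pH s + (1 - ψ) * pL s)

/-- A strategy maps each signal to an acceptance probability in `[0,1]`. -/
def IsStrategy {m : ℕ} (σ : Fin m → ℝ) : Prop := ∀ s, 0 ≤ σ s ∧ σ s ≤ 1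

/-- `σ` is an equilibrium strategy: with `ψ* = Ψ(σ)`, accept for sure when the
posterior exceeds `c`, reject for sure when it falls below `c`. -/
def IsEquilibrium (ρ c : ℝ) (n : ℕ) {m : ℕ} (pL pH σ : Fin m → ℝ) : Prop :=
  IsStrategy σ ∧
  ∀ s : Fin m,
    (c < post (interim ρ n pL pH σ) pL pH s → σ s = 1) ∧
    (post (interim ρ n pL pH σ) pL pH s < c → σ s = 0)

/-- Total surplus `Π(σ) = (1-c)·ρ·(1-r_H(σ)^n) - c·(1-ρ)·(1-r_L(σ)^n)`. -/
def surplus (ρ c : ℝ) (n : ℕ) {m : ℕ} (pL pH σ : Fin m → ℝ) : ℝ :=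
  (1 - c) * ρ * (1 - rej pH σ ^ n) - c * (1 - ρ) * (1 - rej pL σ ^ n)

/-- The most selective equilibrium strategy. -/
def MostSelective (ρ c : ℝ) (n : ℕ) {m : ℕ} (pL pH σ : Fin m → ℝ) : Prop :=
  IsEquilibrium ρ c n pL pH σ ∧
  ∀ σ' : Fin m → ℝ, IsEquilibrium ρ c n pL pH σ' → ∀ s, σ s ≤ σ' s

/-- The least selective equilibrium strategy. -/
def LeastSelective (ρ c : ℝ) (n : ℕ) {m : ℕ} (pL pH σ : Fin m → ℝ) : Prop :=
  IsEquilibrium ρ c n pL pH σ ∧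
  ∀ σ' : Fin m → ℝ, IsEquilibrium ρ c n pL pH σ' → ∀ s, σ' s ≤ σ s

/-- An experiment: `p_L, p_H` are probability mass functions with full joint support,
indexed so that likelihood ratios are nondecreasing. -/
def IsExperiment {m : ℕ} (pL pH : Fin m → ℝ) : Prop :=
  (∀ s, 0 ≤ pL s) ∧ (∀ s, 0 ≤ pH s) ∧
  (∑ s, pL s = 1) ∧ (∑ s, pH s = 1) ∧
  (∀ s, 0 < pL s + pH s) ∧
  (∀ i j : Fin m, i ≤ j → pH i * pL j ≤ pH j * pL i)

/-- A strategy is monotone: a positive acceptance probability at `s_i` forces sure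
acceptance at every signal with strictly higher likelihood ratio. -/
def MonotoneStrategy {m : ℕ} (pL pH σ : Fin m → ℝ) : Prop :=
  ∀ i j : Fin m, 0 < σ i → pH i * pL j < pH j * pL i → σ j = 1

/-- truncated negative-binomial series -/
def Fco (c : ℝ) (i m : ℕ) : ℝ := ∑ d ∈ Finset.range m, ((i + d).choose d : ℝ) * c ^ d

lemma Fco_nonneg {c : ℝ} (hc : 0 ≤ c) (i m : ℕ) : 0 ≤ Fco c i m :=
  Finset.sum_nonneg fun d _ => mul_nonneg (by positivity) (pow_nonneg hc d)

lemma Fco_succ (c : ℝ) (i m : ℕ) :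
    Fco c i (m + 1) = (1 - c) * Fco c (i + 1) m + ((i + m + 1).choose m : ℝ) * c ^ m := by
  induction m with
  | zero => simp [Fco]
  | succ m ih =>
    have hch : (((i + m + 2).choose (m + 1) : ℕ) : ℝ)
        = ((i + m + 1).choose m : ℝ) + ((i + m + 1).choose (m + 1) : ℝ) := by
      rw [show i + m + 2 = (i + m + 1) + 1 from rfl, Nat.choose_succ_succ]
      push_cast; ring
    have h1 : Fco c i (m + 2) = Fco c i (m + 1) + ((i + (m + 1)).choose (m + 1) : ℝ) * c ^ (m + 1) := by
      rw [Fco, Finset.sum_range_succ]; rfl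
    have h2 : Fco c (i + 1) (m + 1) = Fco c (i + 1) m + ((i + 1 + m).choose m : ℝ) * c ^ m := by
      rw [Fco, Finset.sum_range_succ]; rfl
    rw [h1, ih, h2]
    have : ((i + (m + 1)).choose (m + 1) : ℝ) = ((i + m + 1).choose (m + 1) : ℝ) := by
      norm_num [Nat.add_assoc]
    rw [this, show i + 1 + m = i + m + 1 by ring, show i + (m+1) + 1 = i + m + 2 by ring, hch]
    ring

lemma expand_sum (n : ℕ) (c t x : ℝ) :
    ∑ j ∈ Finset.range n, (c + t * x) ^ j
      = ∑ i ∈ Finset.range n, (t ^ i * Fco c i (n - i)) * x ^ i := by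
  have h1 : ∀ j : ℕ, (c + t * x) ^ j
      = ∑ i ∈ Finset.range (j + 1), (t * x) ^ i * c ^ (j - i) * ((j.choose i : ℕ) : ℝ) := by
    intro j
    rw [add_comm c (t * x), add_pow]
  calc ∑ j ∈ Finset.range n, (c + t * x) ^ j
      = ∑ j ∈ Finset.Ico 0 n, ∑ i ∈ Finset.Ico 0 (j + 1),
          (t * x) ^ i * c ^ (j - i) * ((j.choose i : ℕ) : ℝ) := by
        rw [Finset.range_eq_Ico]
        exact Finset.sum_congr rfl fun j _ => by rw [h1 j, Finset.range_eq_Ico]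
    _ = ∑ i ∈ Finset.Ico 0 n, ∑ j ∈ Finset.Ico i n,
          (t * x) ^ i * c ^ (j - i) * ((j.choose i : ℕ) : ℝ) :=
        (Finset.sum_Ico_Ico_comm 0 n fun i j => (t * x) ^ i * c ^ (j - i) * ((j.choose i : ℕ) : ℝ)).symm
    _ = ∑ i ∈ Finset.range n, (t ^ i * Fco c i (n - i)) * x ^ i := by
        rw [← Finset.range_eq_Ico]
        refine Finset.sum_congr rfl fun i _ => ?_
        rw [Finset.sum_Ico_eq_sum_range]
        have : ∀ d : ℕ, (t * x) ^ i * c ^ ((i + d) - i) * (((i + d).choose i : ℕ) : ℝ)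
            = (t * x) ^ i * (((i + d).choose d : ℕ) : ℝ) * c ^ d := by
          intro d
          rw [Nat.add_sub_cancel_left, show (i + d).choose i = (i + d).choose d by
            rw [← Nat.choose_symm (Nat.le_add_right i d)]; norm_num [Nat.add_sub_cancel_left]]
          ring
        rw [Finset.sum_congr rfl fun d _ => this d, Fco, Finset.mul_sum, Finset.sum_mul]
        exact Finset.sum_congr rfl fun d _ => by rw [mul_pow]; ring

lemma w_antitone {c t : ℝ} (hc : 0 ≤ c) (ht : 0 ≤ t) (hct : c + t ≤ 1) (n : ℕ) :
    Antitone (fun i => t ^ i * Fco c i (n - i)) := by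
  apply antitone_nat_of_succ_le
  intro i
  rcases lt_or_ge i n with h | h
  · have hni : n - i = (n - (i + 1)) + 1 := by omega
    have hF : t * Fco c (i + 1) (n - (i + 1)) ≤ Fco c i (n - i) := by
      rw [hni, Fco_succ]
      have h1 : t * Fco c (i + 1) (n - (i + 1)) ≤ (1 - c) * Fco c (i + 1) (n - (i + 1)) :=
        mul_le_mul_of_nonneg_right (by linarith) (Fco_nonneg hc _ _)
      have h2 : 0 ≤ ((i + (n - (i + 1)) + 1).choose (n - (i + 1)) : ℝ) * c ^ (n - (i + 1)) :=
        mul_nonneg (by positivity) (pow_nonneg hc _)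
      linarith
    calc t ^ (i + 1) * Fco c (i + 1) (n - (i + 1))
        = t ^ i * (t * Fco c (i + 1) (n - (i + 1))) := by ring
      _ ≤ t ^ i * Fco c i (n - i) := mul_le_mul_of_nonneg_left hF (pow_nonneg ht i)
  · have h1 : n - i = 0 := by omega
    have h2 : n - (i + 1) = 0 := by omega
    simp [h1, h2, Fco]

lemma cheb (n : ℕ) (w : ℕ → ℝ) (hw : Antitone w) {A B : ℝ} (hB : 0 ≤ B) (hBA : B ≤ A) :
    (∑ i ∈ Finset.range n, w i * A ^ i) * (∑ k ∈ Finset.range n, B ^ k)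
      ≤ (∑ i ∈ Finset.range n, w i * B ^ i) * (∑ k ∈ Finset.range n, A ^ k) := by
  have hA : 0 ≤ A := hB.trans hBA
  set D := ∑ i ∈ Finset.range n, ∑ k ∈ Finset.range n,
      (w i * B ^ i * A ^ k - w i * A ^ i * B ^ k) with hD
  have hterm : ∀ i k : ℕ, 0 ≤ (w i - w k) * (B ^ i * A ^ k - A ^ i * B ^ k) := by
    intro i k
    rcases le_total i k with h | h
    · have hfac : B ^ i * A ^ k - A ^ i * B ^ k = A ^ i * B ^ i * (A ^ (k - i) - B ^ (k - i)) := by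
        rw [show k = i + (k - i) by omega, pow_add, pow_add]
        ring_nf
        simp [Nat.add_sub_cancel_left]
      refine mul_nonneg (sub_nonneg.mpr (hw h)) ?_
      rw [hfac]
      exact mul_nonneg (mul_nonneg (pow_nonneg hA i) (pow_nonneg hB i))
        (sub_nonneg.mpr (pow_le_pow_left₀ hB hBA _))
    · have hfac : B ^ i * A ^ k - A ^ i * B ^ k = -(A ^ k * B ^ k * (A ^ (i - k) - B ^ (i - k))) := by
        rw [show i = k + (i - k) by omega, pow_add, pow_add]
        ring_nf
        simp [Nat.add_sub_cancel_left]
      have h1 : w i - w k ≤ 0 := sub_nonpos.mpr (hw h)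
      have h2 : B ^ i * A ^ k - A ^ i * B ^ k ≤ 0 := by
        rw [hfac]
        simp only [neg_nonpos]
        exact mul_nonneg (mul_nonneg (pow_nonneg hA k) (pow_nonneg hB k))
          (sub_nonneg.mpr (pow_le_pow_left₀ hB hBA _))
      nlinarith [mul_nonneg (neg_nonneg.mpr h1) (neg_nonneg.mpr h2)]
  have hswap : D = ∑ i ∈ Finset.range n, ∑ k ∈ Finset.range n,
      (w k * B ^ k * A ^ i - w k * A ^ k * B ^ i) := Finset.sum_comm
  have h2D : D + D = ∑ i ∈ Finset.range n, ∑ k ∈ Finset.range n,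
      (w i - w k) * (B ^ i * A ^ k - A ^ i * B ^ k) := by
    nth_rw 1 [hD]
    rw [hswap, ← Finset.sum_add_distrib]
    refine Finset.sum_congr rfl fun i _ => ?_
    rw [← Finset.sum_add_distrib]
    exact Finset.sum_congr rfl fun k _ => by ring
  have hDpos : 0 ≤ D := by
    have h0 : 0 ≤ D + D := by
      rw [h2D]
      exact Finset.sum_nonneg fun i _ => Finset.sum_nonneg fun k _ => hterm i k
    linarith
  have hRL : (∑ i ∈ Finset.range n, w i * B ^ i) * (∑ k ∈ Finset.range n, A ^ k)
      - (∑ i ∈ Finset.range n, w i * A ^ i) * (∑ k ∈ Finset.range n, B ^ k) = D := by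
    rw [Finset.sum_mul_sum, Finset.sum_mul_sum, hD, ← Finset.sum_sub_distrib]
    refine Finset.sum_congr rfl fun i _ => ?_
    rw [← Finset.sum_sub_distrib]
  linarith

lemma key_lemma (n : ℕ) {A B c t : ℝ} (hB : 0 ≤ B) (hBA : B ≤ A)
    (hc : 0 ≤ c) (ht : 0 ≤ t) (hct : c + t ≤ 1) :
    (∑ j ∈ Finset.range n, (c + t * A) ^ j) * (∑ k ∈ Finset.range n, B ^ k)
      ≤ (∑ j ∈ Finset.range n, A ^ j) * (∑ k ∈ Finset.range n, (c + t * B) ^ k) := by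
  rw [expand_sum n c t A, expand_sum n c t B,
    mul_comm (∑ j ∈ Finset.range n, A ^ j) _]
  exact cheb n _ (w_antitone hc ht hct n) hB hBA


lemma Gsum_pos {n : ℕ} (hn : 1 ≤ n) {x : ℝ} (hx : 0 ≤ x) :
    0 < ∑ k ∈ Finset.range n, x ^ k :=
  Finset.sum_pos' (fun i _ => pow_nonneg hx i)
    ⟨0, Finset.mem_range.mpr hn, by norm_num⟩

/-- a Blackwell improvement lowers the interim belief under threshold
play. For binary experiments with `E' = (qL, qH)` delivering weakly stronger bad news
and weakly stronger good news than `E = (pL, pH)`, and `σ₁` the strategy rejecting on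
the low signal `0` and accepting on the high signal `1`: `Ψ'(σ₁) ≤ Ψ(σ₁)`. -/
theorem blackwell_lowers_interim_belief
    (ρ : ℝ) (hρ : ρ ∈ Set.Ioo (0:ℝ) 1)
    (n : ℕ) (hn : 1 ≤ n)
    (pL pH qL qH : Fin 2 → ℝ)
    (hE : IsExperiment pL pH) (hE' : IsExperiment qL qH)
    (hbad : qH 0 * pL 0 ≤ pH 0 * qL 0)
    (hgood : pH 1 * qL 1 ≤ qH 1 * pL 1) :
    interim ρ n qL qH (fun s => if s = 0 then (0:ℝ) else 1) ≤
      interim ρ n pL pH (fun s => if s = 0 then (0:ℝ) else 1) := by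
  
  obtain ⟨hρ0, hρ1⟩ := hρ
  obtain ⟨hpL0, hpH0, hpLs, hpHs, -, hpMLR⟩ := hE
  obtain ⟨hqL0, hqH0, hqLs, hqHs, -, hqMLR⟩ := hE'
  rw [Fin.sum_univ_two] at hpLs hpHs hqLs hqHs
  -- abbreviations
  have h01 : (0 : Fin 2) ≤ 1 := by decide
  have hba : pH 0 ≤ pL 0 := by
    have h := hpMLR 0 1 h01
    have e1 : pL 1 = 1 - pL 0 := by linarith
    have e2 : pH 1 = 1 - pH 0 := by linarith
    rw [e1, e2] at h
    nlinarith [h]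
  have hba' : qH 0 ≤ qL 0 := by
    have h := hqMLR 0 1 h01
    have e1 : qL 1 = 1 - qL 0 := by linarith
    have e2 : qH 1 = 1 - qH 0 := by linarith
    rw [e1, e2] at h
    nlinarith [h]
  -- rewrite hgood in terms of signal-0 masses
  have hgood' : (1 - pH 0) * (1 - qL 0) ≤ (1 - qH 0) * (1 - pL 0) := by
    have e1 : pH 1 = 1 - pH 0 := by linarith
    have e2 : qL 1 = 1 - qL 0 := by linarith
    have e3 : qH 1 = 1 - qH 0 := by linarith
    have e4 : pL 1 = 1 - pL 0 := by linarith
    rw [e1, e2, e3, e4] at hgood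
    exact hgood
  -- key product inequality
  have hkey : (∑ k ∈ Finset.range n, (pL 0) ^ k) * (∑ k ∈ Finset.range n, (qH 0) ^ k)
      ≤ (∑ k ∈ Finset.range n, (qL 0) ^ k) * (∑ k ∈ Finset.range n, (pH 0) ^ k) := by
    rcases eq_or_lt_of_le hba' with heq | hlt
    · -- degenerate: qH 0 = qL 0, deduce pL 0 = pH 0
      have hab : pL 0 ≤ pH 0 := by
        rcases eq_or_lt_of_le (hqH0 0) with h0 | h0
        · have hq0 : qL 0 = 0 := by rw [← heq, ← h0]
          nlinarith [hgood']
        · nlinarith [hbad, heq]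
      have : pL 0 = pH 0 := le_antisymm hab hba
      rw [this, ← heq, mul_comm]
    · set t : ℝ := (pL 0 - pH 0) / (qL 0 - qH 0) with htdef
      set c : ℝ := (qL 0 * pH 0 - pL 0 * qH 0) / (qL 0 - qH 0) with hcdef
      have hden : (0:ℝ) < qL 0 - qH 0 := by linarith
      have ht : 0 ≤ t := div_nonneg (by linarith) hden.le
      have hc : 0 ≤ c := div_nonneg (by nlinarith [hbad]) hden.le
      have hct : c + t ≤ 1 := by
        rw [hcdef, htdef, ← add_div, div_le_one hden]
        nlinarith [hgood']
      have ha : pL 0 = c + t * qL 0 := by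
        rw [hcdef, htdef]
        field_simp
        ring
      have hb : pH 0 = c + t * qH 0 := by
        rw [hcdef, htdef]
        field_simp
        ring
      have := key_lemma n (hqH0 0) hba' hc ht hct
      rw [← ha, ← hb] at this
      exact this
  -- compute the rejection probabilities
  have hrej : ∀ p : Fin 2 → ℝ, p 0 + p 1 = 1 →
      rej p (fun s : Fin 2 => if s = 0 then (0:ℝ) else 1) = p 0 := by
    intro p hp
    rw [rej, Fin.sum_univ_two]
    norm_num
    linarith
  have hnpos : (0:ℝ) < 1 / (n : ℝ) := by
    have : (0:ℝ) < (n:ℝ) := by exact_mod_cast hn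
    positivity
  have hvL : visit n pL (fun s : Fin 2 => if s = 0 then (0:ℝ) else 1)
      = (1 / (n:ℝ)) * ∑ k ∈ Finset.range n, (pL 0) ^ k := by rw [visit, hrej pL hpLs]
  have hvH : visit n pH (fun s : Fin 2 => if s = 0 then (0:ℝ) else 1)
      = (1 / (n:ℝ)) * ∑ k ∈ Finset.range n, (pH 0) ^ k := by rw [visit, hrej pH hpHs]
  have hvL' : visit n qL (fun s : Fin 2 => if s = 0 then (0:ℝ) else 1)
      = (1 / (n:ℝ)) * ∑ k ∈ Finset.range n, (qL 0) ^ k := by rw [visit, hrej qL hqLs]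
  have hvH' : visit n qH (fun s : Fin 2 => if s = 0 then (0:ℝ) else 1)
      = (1 / (n:ℝ)) * ∑ k ∈ Finset.range n, (qH 0) ^ k := by rw [visit, hrej qH hqHs]
  rw [interim, interim, hvL, hvH, hvL', hvH']
  set GA := ∑ k ∈ Finset.range n, (pL 0) ^ k with hGA
  set GB := ∑ k ∈ Finset.range n, (pH 0) ^ k with hGB
  set GA' := ∑ k ∈ Finset.range n, (qL 0) ^ k with hGA'
  set GB' := ∑ k ∈ Finset.range n, (qH 0) ^ k with hGB'
  have hGApos : 0 < GA := Gsum_pos hn (hpL0 0)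
  have hGBpos : 0 < GB := Gsum_pos hn (hpH0 0)
  have hGA'pos : 0 < GA' := Gsum_pos hn (hqL0 0)
  have hGB'pos : 0 < GB' := Gsum_pos hn (hqH0 0)
  have hd1 : 0 < ρ * (1 / (n:ℝ) * GB') + (1 - ρ) * (1 / (n:ℝ) * GA') := by
    have := mul_pos hρ0 (mul_pos hnpos hGB'pos)
    have := mul_pos (by linarith : (0:ℝ) < 1 - ρ) (mul_pos hnpos hGA'pos)
    linarith
  have hd2 : 0 < ρ * (1 / (n:ℝ) * GB) + (1 - ρ) * (1 / (n:ℝ) * GA) := by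
    have := mul_pos hρ0 (mul_pos hnpos hGBpos)
    have := mul_pos (by linarith : (0:ℝ) < 1 - ρ) (mul_pos hnpos hGApos)
    linarith
  rw [div_le_div_iff₀ hd1 hd2]
  have hfac : 0 ≤ ρ * (1 - ρ) * (1 / (n:ℝ)) * (1 / (n:ℝ)) * (GA' * GB - GA * GB') := by
    have h1 : 0 ≤ GA' * GB - GA * GB' := by linarith [hkey]
    have h2 : 0 ≤ ρ * (1 - ρ) * (1 / (n:ℝ)) * (1 / (n:ℝ)) := by
      have : (0:ℝ) < 1 - ρ := by linarith
      positivity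
    exact mul_nonneg h2 h1
  nlinarith [hfac]
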